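/- Monotonicity of observational entropy under stochastic post-processing of POVMs: let p_i ≥ 0 with ∑_i p_i = 1, V_i > 0, and let v_{ji} ≥ 0 be a stochastic matrix with ∑_j v_{ji} = 1 for all i. Define p'_j = ∑_i v_{ji} p_i and V'_j = ∑_i v_{ji} V_i, assuming V'_j > 0 for all j. Then -∑_i p_i ln(p_i/V_i) ≤ -∑_j p'_j ln(p'_j/V'_j), with equality iff p_i = ∑_j (v_{ji} V_i / V'_j) p'_j for all i. -/

import Mathlib

open BigOperators

lemma jensen_step {ι : Type*} [Fintype ι] (p V w : ι → ℝ)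
    (hp : ∀ i, 0 ≤ p i) (hV : ∀ i, 0 < V i) (hw : ∀ i, 0 ≤ w i)
    (P Q : ℝ) (hP : P = ∑ i, w i * p i) (hQ : Q = ∑ i, w i * V i) (hQpos : 0 < Q) :
    P * Real.log (P / Q) ≤ ∑ i, w i * (p i * Real.log (p i / V i)) ∧
    (P * Real.log (P / Q) = ∑ i, w i * (p i * Real.log (p i / V i)) →
      ∀ i, w i ≠ 0 → p i / V i = P / Q) := by
  classical
  set t : Finset ι := Finset.univ.filter (fun i => w i ≠ 0) with ht
  set W : ι → ℝ := fun i => w i * V i / Q with hW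
  set x : ι → ℝ := fun i => p i / V i with hx
  have hQne : Q ≠ 0 := ne_of_gt hQpos
  have hmemt : ∀ i, i ∈ t ↔ w i ≠ 0 := by intro i; simp [ht]
  have h₀ : ∀ i ∈ t, 0 < W i := by
    intro i hi
    have hwi : 0 < w i := lt_of_le_of_ne (hw i) (Ne.symm ((hmemt i).1 hi))
    exact div_pos (mul_pos hwi (hV i)) hQpos
  have hext : ∀ (g : ι → ℝ), (∀ i, w i = 0 → g i = 0) → ∑ i ∈ t, g i = ∑ i, g i := by
    intro g hg
    refine Finset.sum_subset t.subset_univ ?_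
    intro i _ hi
    exact hg i (by simpa [hmemt i] using hi)
  have h₁ : ∑ i ∈ t, W i = 1 := by
    have : ∑ i ∈ t, W i = (∑ i, w i * V i) / Q := by
      rw [← Finset.sum_div]
      congr 1
      exact hext _ (fun i h => by simp [hW, h])
    rw [this, ← hQ, div_self hQne]
  have hmem : ∀ i ∈ t, x i ∈ Set.Ici (0:ℝ) := by
    intro i _
    exact div_nonneg (hp i) (hV i).le
  have hS : ∑ i ∈ t, W i • x i = P / Q := by
    have : ∑ i ∈ t, W i • x i = ∑ i ∈ t, w i * p i / Q := by
      refine Finset.sum_congr rfl (fun i _ => ?_)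
      have : V i ≠ 0 := ne_of_gt (hV i)
      simp only [hW, hx, smul_eq_mul]
      field_simp
    rw [this, ← Finset.sum_div, hext _ (fun i h => by simp [h]), hP]
  have hRHS : ∑ i ∈ t, W i • (fun y => y * Real.log y) (x i)
      = (∑ i, w i * (p i * Real.log (p i / V i))) / Q := by
    have h1 : ∀ i ∈ t, W i • (fun y => y * Real.log y) (x i)
        = (w i * (p i * Real.log (p i / V i))) / Q := by
      intro i _
      have : V i ≠ 0 := ne_of_gt (hV i)
      simp only [hW, hx, smul_eq_mul]
      field_simp
    rw [Finset.sum_congr rfl h1, ← Finset.sum_div,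
      hext (fun i => w i * (p i * Real.log (p i / V i))) (fun i h => by simp [h])]
  have hJ := Real.convexOn_mul_log.map_sum_le (fun i hi => (h₀ i hi).le) h₁ hmem
  rw [hS, hRHS] at hJ
  have hfPQ : P / Q * Real.log (P / Q) = (P * Real.log (P / Q)) / Q :=
    div_mul_eq_mul_div _ _ _
  constructor
  · have := hJ
    rw [hfPQ] at this
    exact (div_le_div_iff_of_pos_right hQpos).1 this
  · intro heq i hwi
    have hiff := Real.strictConvexOn_mul_log.map_sum_eq_iff h₀ h₁ hmem
    rw [hS, hRHS, hfPQ, heq] at hiff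
    have := (hiff.1 rfl) i ((hmemt i).2 hwi)
    simpa [hx] using this

lemma obs_aux_le {ι κ : Type*} [Fintype ι] [Fintype κ]
    (p V : ι → ℝ) (v : κ → ι → ℝ)
    (hp : ∀ i, 0 ≤ p i) (hV : ∀ i, 0 < V i)
    (hv : ∀ j i, 0 ≤ v j i) (hvsum : ∀ i, ∑ j, v j i = 1)
    (p' V' : κ → ℝ)
    (hp' : ∀ j, p' j = ∑ i, v j i * p i)
    (hV' : ∀ j, V' j = ∑ i, v j i * V i)
    (hV'pos : ∀ j, 0 < V' j) :
    ∑ j, p' j * Real.log (p' j / V' j) ≤ ∑ i, p i * Real.log (p i / V i) := by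
  calc ∑ j, p' j * Real.log (p' j / V' j)
      ≤ ∑ j, ∑ i, v j i * (p i * Real.log (p i / V i)) := by
        refine Finset.sum_le_sum (fun j _ => ?_)
        exact (jensen_step p V (v j) hp hV (hv j) (p' j) (V' j) (hp' j) (hV' j) (hV'pos j)).1
    _ = ∑ i, p i * Real.log (p i / V i) := by
        rw [Finset.sum_comm]
        refine Finset.sum_congr rfl (fun i _ => ?_)
        rw [← Finset.sum_mul, hvsum i, one_mul]

/-- monotonicity of observational entropy under stochastic post-processing
of POVMs, with the equality condition given by Bayesian inversion. -/
theorem obs_entropy_stochastic_monotone {ι κ : Type*} [Fintype ι] [Fintype κ]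
    (p V : ι → ℝ) (v : κ → ι → ℝ)
    (hp : ∀ i, 0 ≤ p i) (hpsum : ∑ i, p i = 1)
    (hV : ∀ i, 0 < V i)
    (hv : ∀ j i, 0 ≤ v j i) (hvsum : ∀ i, ∑ j, v j i = 1)
    (p' V' : κ → ℝ)
    (hp' : ∀ j, p' j = ∑ i, v j i * p i)
    (hV' : ∀ j, V' j = ∑ i, v j i * V i)
    (hV'pos : ∀ j, 0 < V' j) :
    (-∑ i, p i * Real.log (p i / V i) ≤ -∑ j, p' j * Real.log (p' j / V' j))
    ∧ ((-∑ i, p i * Real.log (p i / V i) = -∑ j, p' j * Real.log (p' j / V' j))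
        ↔ ∀ i, p i = ∑ j, (v j i * V i / V' j) * p' j) := by
  have hle := obs_aux_le p V v hp hV hv hvsum p' V' hp' hV' hV'pos
  refine ⟨by linarith, ?_, ?_⟩
  · -- equality → Bayesian inversion
    intro heq
    have heq' : ∑ j, p' j * Real.log (p' j / V' j) = ∑ i, p i * Real.log (p i / V i) := by
      linarith
    -- each term of the Jensen inequality is tight
    set g : κ → ℝ := fun j =>
      (∑ i, v j i * (p i * Real.log (p i / V i))) - p' j * Real.log (p' j / V' j) with hg
    have hgnn : ∀ j ∈ Finset.univ, 0 ≤ g j := by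
      intro j _
      have := (jensen_step p V (v j) hp hV (hv j) (p' j) (V' j) (hp' j) (hV' j) (hV'pos j)).1
      simp [hg]; linarith
    have hgsum : ∑ j, g j = 0 := by
      have : ∑ j, ∑ i, v j i * (p i * Real.log (p i / V i))
          = ∑ i, p i * Real.log (p i / V i) := by
        rw [Finset.sum_comm]
        refine Finset.sum_congr rfl (fun i _ => ?_)
        rw [← Finset.sum_mul, hvsum i, one_mul]
      simp only [hg, Finset.sum_sub_distrib, this, heq', sub_self]
    have hg0 : ∀ j, g j = 0 := by
      intro j
      exact (Finset.sum_eq_zero_iff_of_nonneg hgnn).1 hgsum j (Finset.mem_univ j)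
    have hkey : ∀ j i, v j i ≠ 0 → p i / V i = p' j / V' j := by
      intro j i hvi
      have h0 := hg0 j
      simp only [hg, sub_eq_zero] at h0
      exact (jensen_step p V (v j) hp hV (hv j) (p' j) (V' j) (hp' j) (hV' j)
        (hV'pos j)).2 h0.symm i hvi
    intro i
    have : ∀ j, (v j i * V i / V' j) * p' j = v j i * p i := by
      intro j
      by_cases hvi : v j i = 0
      · simp [hvi]
      · have h1 : p i / V i = p' j / V' j := hkey j i hvi
        have hVi : V i ≠ 0 := ne_of_gt (hV i)
        have hV'j : V' j ≠ 0 := ne_of_gt (hV'pos j)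
        have h2 : p' j = p i / V i * V' j := (div_eq_iff hV'j).1 h1.symm
        rw [h2]
        field_simp
    rw [Finset.sum_congr rfl (fun j _ => this j), ← Finset.sum_mul, hvsum i, one_mul]
  · -- Bayesian inversion → equality
    intro h
    have hp'nn : ∀ j, 0 ≤ p' j := by
      intro j
      rw [hp' j]
      exact Finset.sum_nonneg (fun i _ => mul_nonneg (hv j i) (hp i))
    have hrev := obs_aux_le p' V' (fun i j => v j i * V i / V' j) hp'nn hV'pos
      (fun i j => div_nonneg (mul_nonneg (hv j i) (hV i).le) (hV'pos j).le)
      (fun j => by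
        rw [← Finset.sum_div, ← hV' j, div_self (ne_of_gt (hV'pos j))])
      p V h
      (fun i => by
        have : ∀ j, v j i * V i / V' j * V' j = v j i * V i := by
          intro j
          exact div_mul_cancel₀ _ (ne_of_gt (hV'pos j))
        rw [Finset.sum_congr rfl (fun j _ => this j), ← Finset.sum_mul, hvsum i, one_mul])
      hV
    linarith
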